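/- Let f : ℝⁿ → ℝ be convex and differentiable with L₁-Lipschitz gradient, with global minimum f* at x*. Let u be a standard Gaussian vector and μ > 0. Then ⟨∇f_μ(x), x − x*⟩ ≥ f(x) − f* − (μ²/2)L₁n, where f_μ is the Gaussian smoothing of f. -/

import Mathlib

open MeasureTheory ProbabilityTheory Real Set Filter

lemma integrable_sq_mul_exp : Integrable (fun x : ℝ => x ^ 2 * exp (-x ^ 2 / 2)) := by
  have h := integrable_rpow_mul_exp_neg_mul_sq (b := 1/2) (by norm_num) (s := 2) (by norm_num)
  have heq : (fun x : ℝ => x ^ (2:ℝ) * exp (-(1/2) * x ^ 2))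
      = fun x : ℝ => x ^ 2 * exp (-x ^ 2 / 2) := by
    funext x
    rw [show ((2:ℝ) = ((2:ℕ):ℝ)) by norm_num, Real.rpow_natCast]
    ring_nf
  exact heq ▸ h

lemma integrable_exp_neg_sq_half : Integrable (fun x : ℝ => exp (-x ^ 2 / 2)) := by
  have h := integrable_exp_neg_mul_sq (b := 1/2) (by norm_num)
  simpa [neg_div, mul_comm, div_eq_mul_inv, mul_assoc] using
    (by convert h using 2 with x; ring_nf :
      Integrable (fun x : ℝ => exp (-x ^ 2 / 2)))

lemma integrable_mul_exp_neg_sq_half : Integrable (fun x : ℝ => x * exp (-x ^ 2 / 2)) := by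
  have h := integrable_mul_exp_neg_mul_sq (b := 1/2) (by norm_num)
  convert h using 2 with x; ring_nf

lemma hasDerivAt_exp_neg_sq_half (x : ℝ) :
    HasDerivAt (fun x : ℝ => exp (-x ^ 2 / 2)) (-x * exp (-x ^ 2 / 2)) x := by
  have h1 : HasDerivAt (fun x : ℝ => -x ^ 2 / 2) (-x) x := by
    have := ((hasDerivAt_pow 2 x).neg).div_const 2
    simpa using this.congr_deriv (by push_cast; ring)
  simpa [mul_comm] using h1.exp

lemma integral_mul_exp_neg_sq_half : ∫ x : ℝ, x * exp (-x ^ 2 / 2) = 0 := by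
  have hd : ∀ x : ℝ, HasDerivAt (fun x : ℝ => -exp (-x ^ 2 / 2)) (x * exp (-x ^ 2 / 2)) x := by
    intro x
    exact (hasDerivAt_exp_neg_sq_half x).neg.congr_deriv (by ring)
  exact integral_eq_zero_of_hasDerivAt_of_integrable hd integrable_mul_exp_neg_sq_half
    integrable_exp_neg_sq_half.neg

lemma integral_sq_mul_exp_neg_sq_half :
    ∫ x : ℝ, x ^ 2 * exp (-x ^ 2 / 2) = Real.sqrt (2 * π) := by
  have hd : ∀ x : ℝ, HasDerivAt (fun x : ℝ => x * exp (-x ^ 2 / 2))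
      (exp (-x ^ 2 / 2) - x ^ 2 * exp (-x ^ 2 / 2)) x := by
    intro x
    have := (hasDerivAt_id x).mul (hasDerivAt_exp_neg_sq_half x)
    simp only [id_eq] at this
    exact this.congr_deriv (by ring)
  have h0 : ∫ x : ℝ, (exp (-x ^ 2 / 2) - x ^ 2 * exp (-x ^ 2 / 2)) = 0 :=
    integral_eq_zero_of_hasDerivAt_of_integrable hd
      (integrable_exp_neg_sq_half.sub integrable_sq_mul_exp) integrable_mul_exp_neg_sq_half
  have hsub := integral_sub integrable_exp_neg_sq_half integrable_sq_mul_exp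
  rw [hsub, sub_eq_zero] at h0
  rw [← h0]
  have h := integral_gaussian (1/2)
  have : ∫ x : ℝ, exp (-x ^ 2 / 2) = ∫ x : ℝ, exp (-(1/2) * x ^ 2) := by
    congr 1; funext x; ring_nf
  rw [this, h]
  rw [show π / (1/2) = 2 * π by ring]

lemma gaussianReal_01_eq : gaussianReal 0 1
    = (volume : Measure ℝ).withDensity
        (fun x => ENNReal.ofReal ((Real.sqrt (2 * π))⁻¹ * exp (-x ^ 2 / 2))) := by
  rw [gaussianReal_of_var_ne_zero _ one_ne_zero]
  congr 1
  funext x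
  rw [gaussianPDF]
  congr 1
  rw [gaussianPDFReal]
  norm_num

lemma pdf01_nonneg (x : ℝ) : 0 ≤ (Real.sqrt (2 * π))⁻¹ * exp (-x ^ 2 / 2) :=
  mul_nonneg (inv_nonneg.2 (Real.sqrt_nonneg _)) (exp_pos _).le

lemma integral_gauss01 (g : ℝ → ℝ) :
    ∫ x, g x ∂(gaussianReal 0 1)
      = ∫ x : ℝ, ((Real.sqrt (2 * π))⁻¹ * exp (-x ^ 2 / 2)) * g x := by
  rw [gaussianReal_01_eq]
  have hm : Measurable (fun x : ℝ => ((Real.sqrt (2 * π))⁻¹ * exp (-x ^ 2 / 2)).toNNReal) :=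
    (by fun_prop : Measurable (fun x : ℝ => (Real.sqrt (2 * π))⁻¹ * exp (-x ^ 2 / 2))).real_toNNReal
  have := integral_withDensity_eq_integral_smul (μ := (volume : Measure ℝ)) hm g
  simp only [ENNReal.ofReal]
  rw [this]
  congr 1
  funext x
  rw [NNReal.smul_def, smul_eq_mul, Real.coe_toNNReal _ (pdf01_nonneg x)]

lemma integrable_gauss01_iff (g : ℝ → ℝ) (hg : Measurable g) :
    Integrable g (gaussianReal 0 1)
      ↔ Integrable (fun x : ℝ => g x * ((Real.sqrt (2 * π))⁻¹ * exp (-x ^ 2 / 2))) := by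
  rw [gaussianReal_01_eq]
  rw [integrable_withDensity_iff (by fun_prop) (Eventually.of_forall fun x => ENNReal.ofReal_lt_top)]
  have hcong : ∀ x : ℝ, g x * (ENNReal.ofReal ((Real.sqrt (2 * π))⁻¹ * exp (-x ^ 2 / 2))).toReal
      = g x * ((Real.sqrt (2 * π))⁻¹ * exp (-x ^ 2 / 2)) := fun x => by
    rw [ENNReal.toReal_ofReal (pdf01_nonneg x)]
  constructor
  · intro h; exact h.congr (Eventually.of_forall fun x => hcong x)
  · intro h; exact h.congr (Eventually.of_forall fun x => (hcong x).symm)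

lemma sqrt_two_pi_pos : 0 < Real.sqrt (2 * π) :=
  Real.sqrt_pos.2 (by positivity)

lemma integrable_id_gauss01 : Integrable (fun x : ℝ => x) (gaussianReal 0 1) := by
  rw [show (fun x : ℝ => x) = id from rfl, integrable_gauss01_iff _ measurable_id]
  have := integrable_mul_exp_neg_sq_half.const_mul ((Real.sqrt (2 * π))⁻¹)
  refine this.congr (Eventually.of_forall fun x => by simp only [id_eq]; ring)

lemma integrable_sq_gauss01 : Integrable (fun x : ℝ => x ^ 2) (gaussianReal 0 1) := by
  rw [integrable_gauss01_iff _ (by fun_prop)]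
  have := integrable_sq_mul_exp.const_mul ((Real.sqrt (2 * π))⁻¹)
  refine this.congr (Eventually.of_forall fun x => by simp only [id_eq]; ring)

lemma integral_id_gauss01 : ∫ x, x ∂(gaussianReal 0 1) = 0 := by
  rw [integral_gauss01]
  have : ∀ x : ℝ, ((Real.sqrt (2 * π))⁻¹ * exp (-x ^ 2 / 2)) * x
      = (Real.sqrt (2 * π))⁻¹ * (x * exp (-x ^ 2 / 2)) := fun x => by ring
  simp_rw [this, integral_const_mul, integral_mul_exp_neg_sq_half, mul_zero]

lemma integral_sq_gauss01 : ∫ x, x ^ 2 ∂(gaussianReal 0 1) = 1 := by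
  rw [integral_gauss01]
  have : ∀ x : ℝ, ((Real.sqrt (2 * π))⁻¹ * exp (-x ^ 2 / 2)) * x ^ 2
      = (Real.sqrt (2 * π))⁻¹ * (x ^ 2 * exp (-x ^ 2 / 2)) := fun x => by ring
  simp_rw [this, integral_const_mul, integral_sq_mul_exp_neg_sq_half]
  exact inv_mul_cancel₀ sqrt_two_pi_pos.ne'

lemma convex_fderiv_le {E : Type*} [NormedAddCommGroup E] [NormedSpace ℝ E]
    {f : E → ℝ} (hf : ConvexOn ℝ Set.univ f) (hdiff : Differentiable ℝ f) (a b : E) :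
    f a + fderiv ℝ f a (b - a) ≤ f b := by
  set φ : ℝ → ℝ := fun t => f (t • (b - a) + a) with hφ
  have hconv : ConvexOn ℝ Set.univ φ := by
    have h := hf.comp_affineMap (AffineMap.lineMap a b)
    rw [Set.preimage_univ] at h
    refine ConvexOn.congr h (fun t _ => ?_)
    simp [Function.comp, AffineMap.lineMap_apply_module', φ]
  have hc : HasDerivAt (fun t : ℝ => t • (b - a) + a) (b - a) 0 := by
    simpa using ((hasDerivAt_id (0 : ℝ)).smul_const (b - a)).add_const a
  have hd : HasDerivAt φ (fderiv ℝ f a (b - a)) 0 := by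
    have := (hdiff ((0 : ℝ) • (b - a) + a)).hasFDerivAt.comp_hasDerivAt 0 hc
    simpa [Function.comp_def, φ] using this
  have hs := hconv.le_slope_of_hasDerivAt (Set.mem_univ (0 : ℝ)) (Set.mem_univ 1)
    one_pos hd
  have hφ1 : φ 1 = f b := by simp [φ]
  have hφ0 : φ 0 = f a := by simp [φ]
  rw [slope_def_field, hφ1, hφ0] at hs
  simp only [div_one, sub_zero] at hs
  linarith

lemma descent_at_critical {E : Type*} [NormedAddCommGroup E] [InnerProductSpace ℝ E]
    {f : E → ℝ} {L : ℝ} (hdiff : Differentiable ℝ f)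
    (hlip : ∀ x y : E, ‖fderiv ℝ f x - fderiv ℝ f y‖ ≤ L * ‖x - y‖)
    {a : E} (ha : fderiv ℝ f a = 0) (h : E) : f (a + h) ≤ f a + L / 2 * ‖h‖ ^ 2 := by
  have hcontf : Continuous fun x : E => fderiv ℝ f x := by
    refine (LipschitzWith.of_dist_le_mul (K := L.toNNReal) fun x y => ?_).continuous
    rw [dist_eq_norm, dist_eq_norm]
    calc ‖fderiv ℝ f x - fderiv ℝ f y‖ ≤ L * ‖x - y‖ := hlip x y
    _ ≤ L.toNNReal * ‖x - y‖ :=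
        mul_le_mul_of_nonneg_right (Real.le_coe_toNNReal L) (norm_nonneg _)
  set φ' : ℝ → ℝ := fun t => fderiv ℝ f (a + t • h) h with hφ'
  have hcurve : ∀ t : ℝ, HasDerivAt (fun t : ℝ => a + t • h) h t := by
    intro t
    simpa using (((hasDerivAt_id t).smul_const h).const_add a)
  have hd : ∀ t : ℝ, HasDerivAt (fun t => f (a + t • h)) (φ' t) t := by
    intro t
    simpa [Function.comp_def, φ'] using (hdiff (a + t • h)).hasFDerivAt.comp_hasDerivAt t (hcurve t)
  have hcont : Continuous φ' := by
    have : Continuous fun t : ℝ => fderiv ℝ f (a + t • h) :=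
      hcontf.comp (by continuity)
    exact this.clm_apply continuous_const
  have hFTC : ∫ t in (0:ℝ)..1, φ' t = f (a + h) - f a := by
    have := intervalIntegral.integral_eq_sub_of_hasDerivAt
      (f := fun t => f (a + t • h)) (f' := φ')
      (fun t _ => hd t) (hcont.intervalIntegrable 0 1)
    simpa using this
  have hbound : ∀ t ∈ Set.Icc (0:ℝ) 1, φ' t ≤ (L * ‖h‖ ^ 2) * t := by
    intro t ht
    have h1 : φ' t = (fderiv ℝ f (a + t • h) - fderiv ℝ f a) h := by
      simp [φ', ha]
    have h2 : ‖(fderiv ℝ f (a + t • h) - fderiv ℝ f a) h‖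
        ≤ ‖fderiv ℝ f (a + t • h) - fderiv ℝ f a‖ * ‖h‖ :=
      ContinuousLinearMap.le_opNorm _ _
    have h3 : ‖fderiv ℝ f (a + t • h) - fderiv ℝ f a‖ ≤ L * (t * ‖h‖) := by
      have := hlip (a + t • h) a
      simpa [norm_smul, abs_of_nonneg ht.1] using this
    have h4 : φ' t ≤ ‖(fderiv ℝ f (a + t • h) - fderiv ℝ f a) h‖ := by
      rw [h1]; exact le_abs_self _
    calc φ' t ≤ ‖fderiv ℝ f (a + t • h) - fderiv ℝ f a‖ * ‖h‖ := le_trans h4 h2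
    _ ≤ (L * (t * ‖h‖)) * ‖h‖ := mul_le_mul_of_nonneg_right h3 (norm_nonneg _)
    _ = (L * ‖h‖ ^ 2) * t := by ring
  have hint : ∫ t in (0:ℝ)..1, φ' t ≤ ∫ t in (0:ℝ)..1, (L * ‖h‖ ^ 2) * t := by
    refine intervalIntegral.integral_mono_on zero_le_one (hcont.intervalIntegrable 0 1)
      (by apply Continuous.intervalIntegrable; continuity) hbound
  have hval : ∫ t in (0:ℝ)..1, (L * ‖h‖ ^ 2) * t = L / 2 * ‖h‖ ^ 2 := by
    rw [intervalIntegral.integral_const_mul, integral_id]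
    ring
  rw [hFTC] at hint
  rw [hval] at hint
  linarith


theorem smoothed_gradient_inner_bound {n : ℕ} {Ω : Type*} [MeasurableSpace Ω]
    (P : Measure Ω) [IsProbabilityMeasure P]
    (u : Ω → EuclideanSpace ℝ (Fin n))
    (hmeas : ∀ i, Measurable fun ω => u ω i)
    (hlaw : ∀ i, Measure.map (fun ω => u ω i) P = gaussianReal 0 1)
    (hindep : iIndepFun (fun i ω => u ω i) P)
    (f : EuclideanSpace ℝ (Fin n) → ℝ) (L₁ : ℝ)
    (hf : ConvexOn ℝ Set.univ f) (hdiff : Differentiable ℝ f)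
    (hlip : ∀ x y, ‖gradient f x - gradient f y‖ ≤ L₁ * ‖x - y‖)
    (xstar : EuclideanSpace ℝ (Fin n)) (hmin : ∀ y, f xstar ≤ f y)
    (μ : ℝ) (hμ : 0 < μ) (x : EuclideanSpace ℝ (Fin n))
    (hint : ∀ y, Integrable (fun ω => f (y + μ • u ω)) P) :
    f x - f xstar - μ ^ 2 / 2 * L₁ * n
      ≤ (inner ℝ (gradient (fun y => ∫ ω, f (y + μ • u ω) ∂P) x) (x - xstar) : ℝ) := by
  set g : EuclideanSpace ℝ (Fin n) → ℝ := fun y => ∫ ω, f (y + μ • u ω) ∂P with hg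
  -- fderiv facts
  have hfd_inner : ∀ (y v : EuclideanSpace ℝ (Fin n)), fderiv ℝ f y v = (inner ℝ (gradient f y) v : ℝ) := by
    intro y v; rw [gradient, InnerProductSpace.toDual_symm_apply]
  have hlipF : ∀ a b : EuclideanSpace ℝ (Fin n), ‖fderiv ℝ f a - fderiv ℝ f b‖ ≤ L₁ * ‖a - b‖ := by
    intro a b
    have h : fderiv ℝ f a - fderiv ℝ f b
        = (InnerProductSpace.toDual ℝ (EuclideanSpace ℝ (Fin n))) (gradient f a - gradient f b) := by
      rw [map_sub, gradient, gradient, LinearIsometryEquiv.apply_symm_apply,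
        LinearIsometryEquiv.apply_symm_apply]
    rw [h, LinearIsometryEquiv.norm_map]; exact hlip a b
  have hcontf : Continuous fun z : EuclideanSpace ℝ (Fin n) => fderiv ℝ f z := by
    refine (LipschitzWith.of_dist_le_mul (K := L₁.toNNReal) fun a b => ?_).continuous
    rw [dist_eq_norm, dist_eq_norm]
    exact le_trans (hlipF a b)
      (mul_le_mul_of_nonneg_right (Real.le_coe_toNNReal L₁) (norm_nonneg _))
  have humeas : Measurable u := (WithLp.measurable_toLp 2 _).comp (measurable_pi_iff.mpr hmeas)
  -- moments of coordinates
  have hui_int : ∀ i, Integrable (fun ω => u ω i) P := by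
    intro i
    have h := (integrable_map_measure (μ := P) (f := fun ω => u ω i) (g := fun x : ℝ => x)
      (by rw [hlaw i]; exact aestronglyMeasurable_id) (hmeas i).aemeasurable).mp
    rw [hlaw i] at h
    exact h integrable_id_gauss01
  have hui_mean : ∀ i, ∫ ω, u ω i ∂P = 0 := by
    intro i
    have h := integral_map (μ := P) (φ := fun ω => u ω i) (f := fun x : ℝ => x)
      (hmeas i).aemeasurable (by rw [hlaw i]; exact aestronglyMeasurable_id)
    rw [hlaw i, integral_id_gauss01] at h
    exact h.symm
  have hui2_int : ∀ i, Integrable (fun ω => (u ω i) ^ 2) P := by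
    intro i
    have h := (integrable_map_measure (μ := P) (f := fun ω => u ω i) (g := fun x : ℝ => x ^ 2)
      (by rw [hlaw i]; exact (by fun_prop : Measurable fun x : ℝ => x ^ 2).aestronglyMeasurable)
      (hmeas i).aemeasurable).mp
    rw [hlaw i] at h
    exact h integrable_sq_gauss01
  have hui2 : ∀ i, ∫ ω, (u ω i) ^ 2 ∂P = 1 := by
    intro i
    have h := integral_map (μ := P) (φ := fun ω => u ω i) (f := fun x : ℝ => x ^ 2)
      (hmeas i).aemeasurable
      (by rw [hlaw i]; exact (by fun_prop : Measurable fun x : ℝ => x ^ 2).aestronglyMeasurable)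
    rw [hlaw i, integral_sq_gauss01] at h
    exact h.symm
  have hnormsq : ∀ ω, ‖u ω‖ ^ 2 = ∑ i, (u ω i) ^ 2 := by
    intro ω
    rw [EuclideanSpace.norm_eq, Real.sq_sqrt (Finset.sum_nonneg fun i _ => sq_nonneg _)]
    simp [sq_abs]
  have hUint2 : Integrable (fun ω => ‖u ω‖ ^ 2) P := by
    have := integrable_finset_sum (μ := P) Finset.univ (fun i _ => hui2_int i)
    exact this.congr (Eventually.of_forall fun ω => (hnormsq ω).symm)
  have hU2 : ∫ ω, ‖u ω‖ ^ 2 ∂P = n := by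
    simp_rw [hnormsq]
    rw [integral_finset_sum _ (fun i _ => hui2_int i)]
    simp [hui2]
  have hUnorm_int : Integrable (fun ω => ‖u ω‖) P := by
    refine (hUint2.add (integrable_const 1)).mono'
      humeas.norm.aestronglyMeasurable (Eventually.of_forall fun ω => ?_)
    simp only [Pi.add_apply, norm_norm]
    nlinarith [sq_nonneg (‖u ω‖ - 1), norm_nonneg (u ω)]
  -- differentiation under the integral sign
  set F' : Ω → EuclideanSpace ℝ (Fin n) →L[ℝ] ℝ := fun ω => fderiv ℝ f (x + μ • u ω) with hF'
  have hmeas2 : Measurable fun ω => x + μ • u ω := (humeas.const_smul μ).const_add x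
  have hF'_meas : AEStronglyMeasurable F' P :=
    (hcontf.comp_stronglyMeasurable hmeas2.stronglyMeasurable).aestronglyMeasurable
  have hgb : ∀ ω, ‖F' ω‖ ≤ ‖fderiv ℝ f x‖ + L₁ * (|μ| * ‖u ω‖) := by
    intro ω
    have h1 : ‖F' ω - fderiv ℝ f x‖ ≤ L₁ * ‖(x + μ • u ω) - x‖ := hlipF _ _
    have h2 : ‖(x + μ • u ω) - x‖ = |μ| * ‖u ω‖ := by
      rw [add_sub_cancel_left, norm_smul, Real.norm_eq_abs]
    calc ‖F' ω‖ = ‖fderiv ℝ f x + (F' ω - fderiv ℝ f x)‖ := by congr 1; abel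
    _ ≤ ‖fderiv ℝ f x‖ + ‖F' ω - fderiv ℝ f x‖ := norm_add_le _ _
    _ ≤ ‖fderiv ℝ f x‖ + L₁ * (|μ| * ‖u ω‖) := by rw [← h2]; gcongr
  have hF'norm_int : Integrable (fun ω => ‖F' ω‖) P := by
    refine ((integrable_const (‖fderiv ℝ f x‖)).add ((hUnorm_int.const_mul (L₁ * |μ|)))).mono'
      hF'_meas.norm (Eventually.of_forall fun ω => ?_)
    simp only [Pi.add_apply, norm_norm]
    calc ‖F' ω‖ ≤ ‖fderiv ℝ f x‖ + L₁ * (|μ| * ‖u ω‖) := hgb ω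
    _ = ‖fderiv ℝ f x‖ + L₁ * |μ| * ‖u ω‖ := by ring
  have key := hasFDerivAt_integral_of_dominated_loc_of_lip
    (F := fun (y : EuclideanSpace ℝ (Fin n)) (ω : Ω) => f (y + μ • u ω)) (F' := F') (x₀ := x) (μ := P)
    (bound := fun ω => ‖F' ω‖ + |L₁|) (Metric.ball_mem_nhds x one_pos)
    (Eventually.of_forall fun y =>
      (hdiff.continuous.measurable.comp ((humeas.const_smul μ).const_add y)).aestronglyMeasurable)
    (hint x) hF'_meas
    ?hlip
    (hF'norm_int.add (integrable_const |L₁|))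
    (Eventually.of_forall fun ω => ?hdiff)
  case hlip =>
    refine Eventually.of_forall fun ω => ?_
    rw [lipschitzOnWith_iff_dist_le_mul]
    intro a ha b hb
    rw [Real.dist_eq]
    have hda : ∀ z ∈ Metric.ball x 1, DifferentiableAt ℝ (fun y : EuclideanSpace ℝ (Fin n) => f (y + μ • u ω)) z :=
      fun z _ => (hdiff _).comp z (differentiable_id.add_const _).differentiableAt
    have hfd : ∀ z : EuclideanSpace ℝ (Fin n), fderiv ℝ (fun y : EuclideanSpace ℝ (Fin n) => f (y + μ • u ω)) z
        = fderiv ℝ f (z + μ • u ω) := by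
      intro z
      have h := ((hdiff (z + μ • u ω)).hasFDerivAt.comp z
        ((hasFDerivAt_id z).add_const (μ • u ω)))
      simpa [Function.comp_def] using h.fderiv
    have hb2 : ∀ z ∈ Metric.ball x 1, ‖fderiv ℝ (fun y : EuclideanSpace ℝ (Fin n) => f (y + μ • u ω)) z‖
        ≤ ‖F' ω‖ + |L₁| := by
      intro z hz
      rw [hfd z]
      have h1 : ‖fderiv ℝ f (z + μ • u ω) - F' ω‖ ≤ L₁ * ‖z - x‖ := by
        have := hlipF (z + μ • u ω) (x + μ • u ω)
        simpa [add_sub_add_comm] using this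
      have h2 : ‖z - x‖ < 1 := by rwa [← dist_eq_norm, ← Metric.mem_ball]
      have h3 : L₁ * ‖z - x‖ ≤ |L₁| := by
        calc L₁ * ‖z - x‖ ≤ |L₁ * ‖z - x‖| := le_abs_self _
        _ = |L₁| * ‖z - x‖ := by rw [abs_mul, abs_of_nonneg (norm_nonneg _)]
        _ ≤ |L₁| * 1 := mul_le_mul_of_nonneg_left h2.le (abs_nonneg _)
        _ = |L₁| := mul_one _
      calc ‖fderiv ℝ f (z + μ • u ω)‖
          = ‖F' ω + (fderiv ℝ f (z + μ • u ω) - F' ω)‖ := by congr 1; abel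
      _ ≤ ‖F' ω‖ + ‖fderiv ℝ f (z + μ • u ω) - F' ω‖ := norm_add_le _ _
      _ ≤ ‖F' ω‖ + |L₁| := by gcongr; exact le_trans h1 h3
    have hlipball := (convex_ball x 1).lipschitzOnWith_of_nnnorm_fderiv_le
      (C := Real.nnabs (‖F' ω‖ + |L₁|)) hda ?_
    · have := lipschitzOnWith_iff_dist_le_mul.mp hlipball a ha b hb
      rw [Real.dist_eq, dist_eq_norm] at this
      calc |f (a + μ • u ω) - f (b + μ • u ω)|
          ≤ (Real.nnabs (‖F' ω‖ + |L₁|) : ℝ) * ‖a - b‖ := this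
      _ = (Real.nnabs (‖F' ω‖ + |L₁|) : ℝ) * dist a b := by rw [dist_eq_norm]
    · intro z hz
      rw [← NNReal.coe_le_coe, coe_nnnorm, Real.coe_nnabs,
        abs_of_nonneg (by positivity : (0:ℝ) ≤ ‖F' ω‖ + |L₁|)]
      exact hb2 z hz
  case hdiff =>
    have h := (hdiff (x + μ • u ω)).hasFDerivAt.comp x
      ((hasFDerivAt_id x).add_const (μ • u ω))
    simpa [Function.comp_def, F'] using h
  obtain ⟨hF'_int, hgderiv⟩ := key
  -- gradient of g
  have hinner : ∀ v : EuclideanSpace ℝ (Fin n), (inner ℝ (gradient g x) v : ℝ) = ∫ ω, F' ω v ∂P := by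
    intro v
    rw [gradient, hgderiv.fderiv, InnerProductSpace.toDual_symm_apply]
    exact ContinuousLinearMap.integral_apply hF'_int v
  -- bound (1): g xstar ≤ f xstar + μ²/2 L₁ n
  have hcrit : fderiv ℝ f xstar = 0 := IsLocalMin.fderiv_eq_zero (Eventually.of_forall hmin)
  have hA : g xstar ≤ f xstar + μ ^ 2 / 2 * L₁ * n := by
    have hpt : ∀ ω, f (xstar + μ • u ω) ≤ f xstar + L₁ / 2 * μ ^ 2 * ‖u ω‖ ^ 2 := by
      intro ω
      have := descent_at_critical hdiff hlipF hcrit (μ • u ω)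
      calc f (xstar + μ • u ω) ≤ f xstar + L₁ / 2 * ‖μ • u ω‖ ^ 2 := this
      _ = f xstar + L₁ / 2 * μ ^ 2 * ‖u ω‖ ^ 2 := by
          rw [norm_smul, Real.norm_eq_abs, mul_pow, sq_abs]; ring
    have hmaj : Integrable (fun ω => f xstar + L₁ / 2 * μ ^ 2 * ‖u ω‖ ^ 2) P :=
      (integrable_const _).add (hUint2.const_mul _)
    have hmono := integral_mono (hint xstar) hmaj hpt
    have hval : ∫ ω, (f xstar + L₁ / 2 * μ ^ 2 * ‖u ω‖ ^ 2) ∂P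
        = f xstar + L₁ / 2 * μ ^ 2 * n := by
      rw [integral_add (integrable_const _) (hUint2.const_mul _), integral_const,
        integral_const_mul, hU2]
      simp [measure_univ]
    rw [hval] at hmono
    calc g xstar ≤ f xstar + L₁ / 2 * μ ^ 2 * n := hmono
    _ = f xstar + μ ^ 2 / 2 * L₁ * n := by ring
  -- bound (2): f x ≤ g x
  have hB : f x ≤ g x := by
    set w : EuclideanSpace ℝ (Fin n) := gradient f x with hw
    have hlin_int : Integrable (fun ω => fderiv ℝ f x (μ • u ω)) P := by
      have : (fun ω => fderiv ℝ f x (μ • u ω)) = fun ω => ∑ i, (μ * w i) * u ω i := by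
        funext ω
        rw [hfd_inner, PiLp.inner_apply]
        simp only [RCLike.inner_apply, conj_trivial, PiLp.smul_apply, smul_eq_mul]
        exact Finset.sum_congr rfl fun i _ => by ring
      rw [this]
      exact integrable_finset_sum _ (fun i _ => (hui_int i).const_mul _)
    have hlin_zero : ∫ ω, fderiv ℝ f x (μ • u ω) ∂P = 0 := by
      have heq : (fun ω => fderiv ℝ f x (μ • u ω)) = fun ω => ∑ i, (μ * w i) * u ω i := by
        funext ω
        rw [hfd_inner, PiLp.inner_apply]
        simp only [RCLike.inner_apply, conj_trivial, PiLp.smul_apply, smul_eq_mul]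
        exact Finset.sum_congr rfl fun i _ => by ring
      rw [heq, integral_finset_sum _ (fun i _ => (hui_int i).const_mul _)]
      simp [integral_const_mul, hui_mean]
    have hpt : ∀ ω, f x + fderiv ℝ f x (μ • u ω) ≤ f (x + μ • u ω) := by
      intro ω
      have := convex_fderiv_le hf hdiff x (x + μ • u ω)
      simpa [add_sub_cancel_left] using this
    have hmin2 : Integrable (fun ω => f x + fderiv ℝ f x (μ • u ω)) P :=
      (integrable_const _).add hlin_int
    have hmono := integral_mono hmin2 (hint x) hpt
    have hval : ∫ ω, (f x + fderiv ℝ f x (μ • u ω)) ∂P = f x := by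
      rw [integral_add (integrable_const _) hlin_int, integral_const, hlin_zero]
      simp [measure_univ]
    rw [hval] at hmono
    exact hmono
  -- bound (3)
  have happly_int : Integrable (fun ω => F' ω (xstar - x)) P := by
    refine (hF'norm_int.mul_const ‖xstar - x‖).mono'
      ((ContinuousLinearMap.apply ℝ ℝ (xstar - x)).continuous.comp_aestronglyMeasurable
        hF'_meas) (Eventually.of_forall fun ω => ?_)
    exact ContinuousLinearMap.le_opNorm _ _
  have hC : ∫ ω, F' ω (xstar - x) ∂P ≤ g xstar - g x := by
    have hpt : ∀ ω, F' ω (xstar - x) ≤ f (xstar + μ • u ω) - f (x + μ • u ω) := by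
      intro ω
      have := convex_fderiv_le hf hdiff (x + μ • u ω) (xstar + μ • u ω)
      have heq : (xstar + μ • u ω) - (x + μ • u ω) = xstar - x := by abel
      rw [heq] at this
      linarith
    have hsub : Integrable (fun ω => f (xstar + μ • u ω) - f (x + μ • u ω)) P :=
      (hint xstar).sub (hint x)
    have hmono := integral_mono happly_int hsub hpt
    rwa [integral_sub (hint xstar) (hint x)] at hmono
  -- combine
  have hfinal : (inner ℝ (gradient g x) (x - xstar) : ℝ) = - ∫ ω, F' ω (xstar - x) ∂P := by
    rw [hinner, ← integral_neg]
    congr 1; funext ω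
    rw [show x - xstar = -(xstar - x) by abel, map_neg]
  rw [hfinal]
  have := neg_le_neg hC
  have hn : (n : ℝ) ≥ 0 := Nat.cast_nonneg n
  linarith
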